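/- Let F be a field with char F ≠ 2 and let Sp(2m, F) be defined with respect to the standard alternating form. The centralizer in Sp(2m+2, F) of a suitable semisimple element a = diag(λ, λ⁻¹) ⊕ s (where λ ∈ Fˣ, λ² ≠ 1, and s ∈ Sp(2m, F) is appropriately chosen) contains a direct factor decomposition isomorphic to Fˣ × Sp(2m, F). Consequently, if Sp(2m+2, F) is acceptable then Sp(2m, F) is acceptable. -/

import Mathlib

/-- A group `G` is *acceptable* if for every finite group `H`, any two element-conjugate
homomorphisms `H → G` are globally conjugate. -/
def IsAcceptable (G : Type*) [Group G] : Prop :=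
  ∀ (H : Type) (_ : Group H) (_ : Finite H) (φ₁ φ₂ : H →* G),
    (∀ h : H, ∃ g : G, g * φ₁ h * g⁻¹ = φ₂ h) →
    ∃ g : G, ∀ h : H, g * φ₁ h * g⁻¹ = φ₂ h
open Matrix

/-- The subgroup of `GL n F` preserving the bilinear form with Gram matrix `J`,
i.e. matrices `A` with `ᵗA J A = J`. -/
def formGroup {n : Type*} [Fintype n] [DecidableEq n] {F : Type*} [Field F]
    (J : Matrix n n F) : Subgroup (GL n F) where
  carrier := {A | (A : Matrix n n F)ᵀ * J * (A : Matrix n n F) = J}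
  one_mem' := by simp
  mul_mem' := by
    intro A B hA hB
    simp only [Set.mem_setOf_eq] at *
    have hc : ((A * B : GL n F) : Matrix n n F) = (A : Matrix n n F) * B := rfl
    rw [hc, transpose_mul]
    calc (B : Matrix n n F)ᵀ * (A : Matrix n n F)ᵀ * J * ((A : Matrix n n F) * B)
        = (B : Matrix n n F)ᵀ * ((A : Matrix n n F)ᵀ * J * A) * B := by
          simp only [Matrix.mul_assoc]
      _ = J := by rw [hA]; exact hB
  inv_mem' := by
    intro A hA
    simp only [Set.mem_setOf_eq] at *
    have h1 : ((A : GL n F) : Matrix n n F) * ((A⁻¹ : GL n F) : Matrix n n F) = 1 :=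
      A.mul_inv
    calc ((A⁻¹ : GL n F) : Matrix n n F)ᵀ * J * ((A⁻¹ : GL n F) : Matrix n n F)
        = ((A⁻¹ : GL n F) : Matrix n n F)ᵀ * ((A : Matrix n n F)ᵀ * J * A) *
            ((A⁻¹ : GL n F) : Matrix n n F) := by rw [hA]
      _ = (((A : GL n F) : Matrix n n F) * ((A⁻¹ : GL n F) : Matrix n n F))ᵀ *
            (J * (((A : GL n F) : Matrix n n F) * ((A⁻¹ : GL n F) : Matrix n n F))) := by
          rw [transpose_mul]; simp only [Matrix.mul_assoc]
      _ = J := by rw [h1]; simp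

/-- The symplectic group  for the standard skew-symmetric form. -/
def SpGroup (m : ℕ) (F : Type*) [Field F] : Subgroup (GL (Fin m ⊕ Fin m) F) :=
  formGroup (Matrix.fromBlocks 0 1 (-1) 0)

namespace SpAux

variable (F : Type) [Field F] (m : ℕ)

lemma mem_formGroup_iff {n : Type*} [Fintype n] [DecidableEq n] (J : Matrix n n F) (A : GL n F) :
    A ∈ formGroup J ↔ (A : Matrix n n F)ᵀ * J * (A : Matrix n n F) = J := Iff.rfl

lemma mem_SpGroup_iff {k : ℕ} (A : GL (Fin k ⊕ Fin k) F) :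
    A ∈ SpGroup k F ↔
      (A : Matrix _ _ F)ᵀ * (fromBlocks 0 1 (-1) 0 : Matrix (Fin k ⊕ Fin k) (Fin k ⊕ Fin k) F)
          * (A : Matrix _ _ F)
        = fromBlocks 0 1 (-1) 0 := Iff.rfl

/-- index type for the block decomposition `Sp(2m) ⊕ Sp(2)`. -/
abbrev Km (m : ℕ) := (Fin m ⊕ Fin m) ⊕ (Fin 1 ⊕ Fin 1)

def ρ : Km m ≃ (Fin (m+1) ⊕ Fin (m+1)) :=
  (Equiv.sumSumSumComm (Fin m) (Fin m) (Fin 1) (Fin 1)).trans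
    (Equiv.sumCongr finSumFinEquiv finSumFinEquiv)

/-- Gram matrix of the symplectic form in the block coordinates. -/
def JK : Matrix (Km m) (Km m) F :=
  fromBlocks (fromBlocks 0 1 (-1) 0) 0 0 (fromBlocks 0 1 (-1) 0)

lemma submatrix_J :
    (fromBlocks 0 1 (-1) 0 : Matrix (Fin (m+1) ⊕ Fin (m+1)) (Fin (m+1) ⊕ Fin (m+1)) F).submatrix
        (ρ m) (ρ m) = JK F m := by
  ext x y
  rcases x with (x | x) | (x | x) <;> rcases y with (y | y) | (y | y) <;>
    simp [ρ, JK, Matrix.one_apply, Matrix.submatrix_apply, fromBlocks, Fin.ext_iff] <;> omega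

/-- The reindexing group isomorphism. -/
noncomputable def E : GL (Km m) F ≃* GL (Fin (m+1) ⊕ Fin (m+1)) F :=
  Units.mapEquiv (reindexAlgEquiv F F (ρ m)).toMulEquiv

lemma E_coe (A : GL (Km m) F) :
    ((E F m A : GL (Fin (m+1) ⊕ Fin (m+1)) F) : Matrix _ _ F)
      = (reindexAlgEquiv F F (ρ m)) (A : Matrix _ _ F) := rfl

lemma mem_Sp_E_iff (A : GL (Km m) F) :
    E F m A ∈ SpGroup (m+1) F ↔
      (A : Matrix _ _ F)ᵀ * JK F m * (A : Matrix _ _ F) = JK F m := by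
  set φ := reindexAlgEquiv F F (ρ m) with hφ
  have hJ : (fromBlocks 0 1 (-1) 0 : Matrix (Fin (m+1) ⊕ Fin (m+1)) _ F) = φ (JK F m) := by
    rw [← submatrix_J F m]
    simp [hφ, reindexAlgEquiv_apply, reindex_apply, submatrix_submatrix]
  have hT : (φ ((A : Matrix _ _ F)))ᵀ = φ ((A : Matrix _ _ F)ᵀ) := by
    simp [hφ, reindexAlgEquiv_apply, reindex_apply, transpose_submatrix]
  rw [mem_SpGroup_iff F, E_coe, hJ, hT, ← _root_.map_mul, ← _root_.map_mul]
  exact ⟨fun h => φ.injective h, fun h => by rw [h]⟩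


variable {F m}

/-- Block-diagonal unit. -/
noncomputable def bunit (X : GL (Fin m ⊕ Fin m) F) (Y : GL (Fin 1 ⊕ Fin 1) F) :
    GL (Km m) F where
  val := fromBlocks (X : Matrix _ _ F) 0 0 (Y : Matrix _ _ F)
  inv := fromBlocks ((X⁻¹ : GL _ F) : Matrix _ _ F) 0 0 ((Y⁻¹ : GL _ F) : Matrix _ _ F)
  val_inv := by
    rw [fromBlocks_multiply]
    simp only [Matrix.mul_zero, Matrix.zero_mul, add_zero, zero_add, X.mul_inv, Y.mul_inv]
    exact fromBlocks_one
  inv_val := by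
    rw [fromBlocks_multiply]
    simp only [Matrix.mul_zero, Matrix.zero_mul, add_zero, zero_add, X.inv_mul, Y.inv_mul]
    exact fromBlocks_one

lemma bunit_coe (X : GL (Fin m ⊕ Fin m) F) (Y : GL (Fin 1 ⊕ Fin 1) F) :
    ((bunit X Y : GL (Km m) F) : Matrix _ _ F)
      = fromBlocks (X : Matrix (Fin m ⊕ Fin m) (Fin m ⊕ Fin m) F) 0 0
          (Y : Matrix (Fin 1 ⊕ Fin 1) (Fin 1 ⊕ Fin 1) F) := rfl

lemma bunit_mul (X X' : GL (Fin m ⊕ Fin m) F) (Y Y' : GL (Fin 1 ⊕ Fin 1) F) :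
    bunit X Y * bunit X' Y' = bunit (X * X') (Y * Y') := by
  ext : 1
  rw [Units.val_mul, bunit_coe, bunit_coe, bunit_coe, fromBlocks_multiply]
  simp

lemma bunit_one : (bunit 1 1 : GL (Km m) F) = 1 := by
  ext : 1
  rw [bunit_coe]
  simp only [Units.val_one]
  exact fromBlocks_one

/-- symplectic condition for block matrices. -/
lemma sp_blocks (X : Matrix (Fin m ⊕ Fin m) (Fin m ⊕ Fin m) F)
    (Y : Matrix (Fin 1 ⊕ Fin 1) (Fin 1 ⊕ Fin 1) F) :
    (fromBlocks X 0 0 Y)ᵀ * JK F m * fromBlocks X 0 0 Y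
      = fromBlocks (Xᵀ * fromBlocks 0 1 (-1) 0 * X) 0 0 (Yᵀ * fromBlocks 0 1 (-1) 0 * Y) := by
  rw [JK, fromBlocks_transpose, fromBlocks_multiply, fromBlocks_multiply]
  simp

lemma bunit_mem_iff (X : GL (Fin m ⊕ Fin m) F) (Y : GL (Fin 1 ⊕ Fin 1) F) :
    E F m (bunit X Y) ∈ SpGroup (m+1) F ↔
      (X ∈ SpGroup m F ∧
        (Y : Matrix _ _ F)ᵀ * (fromBlocks 0 1 (-1) 0 : Matrix (Fin 1 ⊕ Fin 1) (Fin 1 ⊕ Fin 1) F)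
            * (Y : Matrix _ _ F) = fromBlocks 0 1 (-1) 0) := by
  rw [mem_Sp_E_iff, bunit_coe, sp_blocks, JK, fromBlocks_inj, mem_SpGroup_iff F]
  tauto

/-- the 2×2 diagonal matrix `diag(α, α⁻¹)`. -/
def dmat (α : Fˣ) : Matrix (Fin 1 ⊕ Fin 1) (Fin 1 ⊕ Fin 1) F :=
  fromBlocks ((α : F) • 1) 0 0 (((α⁻¹ : Fˣ) : F) • 1)

lemma dmat_mul (α β : Fˣ) : (dmat α : Matrix _ _ F) * dmat β = dmat (α * β) := by
  rw [dmat, dmat, dmat, fromBlocks_multiply]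
  simp [smul_smul, mul_comm]

lemma dmat_one : (dmat 1 : Matrix _ _ F) = 1 := by
  simp [dmat]

noncomputable def dGL (α : Fˣ) : GL (Fin 1 ⊕ Fin 1) F where
  val := dmat α
  inv := dmat α⁻¹
  val_inv := by rw [dmat_mul]; simp [dmat_one]
  inv_val := by rw [dmat_mul]; simp [dmat_one]

lemma dGL_coe (α : Fˣ) : ((dGL α : GL (Fin 1 ⊕ Fin 1) F) : Matrix _ _ F) = dmat α := rfl

lemma dGL_mul (α β : Fˣ) : (dGL α : GL (Fin 1 ⊕ Fin 1) F) * dGL β = dGL (α * β) := by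
  ext : 1
  show (dmat α : Matrix _ _ F) * dmat β = dmat (α * β)
  exact dmat_mul α β

lemma dGL_one : (dGL 1 : GL (Fin 1 ⊕ Fin 1) F) = 1 := by
  ext : 1
  exact dmat_one

lemma dmat_sp (α : Fˣ) :
    (dmat α : Matrix _ _ F)ᵀ * (fromBlocks 0 1 (-1) 0 : Matrix (Fin 1 ⊕ Fin 1) (Fin 1 ⊕ Fin 1) F) * dmat α
      = fromBlocks 0 1 (-1) 0 := by
  rw [dmat, fromBlocks_transpose, fromBlocks_multiply, fromBlocks_multiply]
  simp [smul_smul, transpose_smul]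


lemma comm_diag_entry {n : Type*} [Fintype n] [DecidableEq n] {w : n → F}
    {M : Matrix n n F} (h : M * diagonal w = diagonal w * M) {x y : n}
    (hxy : w x ≠ w y) : M x y = 0 := by
  have h1 := congrFun (congrFun h x) y
  rw [mul_diagonal, diagonal_mul] at h1
  by_contra h0
  exact hxy (mul_left_cancel₀ h0 (by rw [h1, mul_comm])).symm

lemma one_by_one (A : Matrix (Fin 1) (Fin 1) F) : A = A 0 0 • 1 := by
  ext i j
  fin_cases i <;> fin_cases j <;> simp

/-- weight function of `diag(1,…,1,-1,-1)`. -/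
def wc : Km m → F := Sum.elim (fun _ => 1) (fun _ => -1)

lemma cmat_diag : (fromBlocks 1 0 0 (-1) : Matrix (Km m) (Km m) F) = diagonal (wc (m := m)) := by
  ext x y
  rcases x with x | x <;> rcases y with y | y <;>
    simp [wc, diagonal, Matrix.one_apply, fromBlocks, Matrix.neg_apply] <;>
    split <;> simp_all

/-- weight function of `diag(1,…,1,λ,λ⁻¹)`. -/
def wa (l : Fˣ) : Km m → F :=
  Sum.elim (fun _ => 1) (Sum.elim (fun _ => (l : F)) (fun _ => ((l⁻¹ : Fˣ) : F)))

lemma amat_diag (l : Fˣ) :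
    (fromBlocks 1 0 0 (dmat l) : Matrix (Km m) (Km m) F) = diagonal (wa (m := m) l) := by
  ext x y
  rcases x with x | (x | x) <;> rcases y with y | (y | y) <;>
    simp [wa, dmat, diagonal, Matrix.one_apply, fromBlocks, Matrix.smul_apply] <;>
    split <;> simp_all

/-- Any matrix commuting with `diag(1,…,1,-1,-1)` is block diagonal (char ≠ 2). -/
lemma block_of_comm_c (hchar : (2 : F) ≠ 0) {M : Matrix (Km m) (Km m) F}
    (h : M * diagonal (wc (m := m)) = diagonal (wc (m := m)) * M) :
    M = fromBlocks M.toBlocks₁₁ 0 0 M.toBlocks₂₂ := by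
  have h1 : (1 : F) ≠ -1 := fun hh => hchar (by linear_combination hh)
  conv_lhs => rw [← fromBlocks_toBlocks M]
  rw [fromBlocks_inj]
  refine ⟨rfl, ?_, ?_, rfl⟩
  · ext i j
    exact comm_diag_entry h (show wc (m := m) (Sum.inl i) ≠ wc (Sum.inr j) from h1)
  · ext i j
    exact comm_diag_entry h (show wc (m := m) (Sum.inr i) ≠ wc (Sum.inl j) from fun hh => h1 hh.symm)

/-- Any matrix commuting with `diag(1,…,1,λ,λ⁻¹)` (λ² ≠ 1) has the shape
`X ⊕ diag(α,β)`. -/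
lemma block_of_comm_a {l : Fˣ} (hl : l ^ 2 ≠ 1) {M : Matrix (Km m) (Km m) F}
    (h : M * diagonal (wa (m := m) l) = diagonal (wa (m := m) l) * M) :
    M = fromBlocks M.toBlocks₁₁ 0 0
      (fromBlocks (M (Sum.inr (Sum.inl 0)) (Sum.inr (Sum.inl 0)) • 1) 0 0
        (M (Sum.inr (Sum.inr 0)) (Sum.inr (Sum.inr 0)) • 1)) := by
  have hsq : (l : F) * (l : F) ≠ 1 := by
    intro hh
    exact hl (Units.ext (by rw [Units.val_pow_eq_pow_val, sq]; simpa using hh))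
  have hinv : (l : F) * ((l⁻¹ : Fˣ) : F) = 1 := l.mul_inv
  have h1 : (1 : F) ≠ (l : F) := by
    intro hh; exact hsq (by rw [← hh, one_mul])
  have h2 : (1 : F) ≠ ((l⁻¹ : Fˣ) : F) := by
    intro hh
    apply h1
    have h' := hinv
    rw [← hh, mul_one] at h'
    rw [h']
  have h3 : (l : F) ≠ ((l⁻¹ : Fˣ) : F) := by
    intro hh
    apply hsq
    rw [show ((l : F) * (l : F)) = (l : F) * ((l⁻¹ : Fˣ) : F) from by rw [← hh]]
    exact hinv
  ext x y
  rcases x with x | (x | x) <;> rcases y with y | (y | y)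
  · rfl
  · refine (comm_diag_entry (x := Sum.inl x) (y := Sum.inr (Sum.inl y)) h ?_).trans
      (by simp [fromBlocks])
    exact h1
  · refine (comm_diag_entry (x := Sum.inl x) (y := Sum.inr (Sum.inr y)) h ?_).trans
      (by simp [fromBlocks])
    exact h2
  · refine (comm_diag_entry (x := Sum.inr (Sum.inl x)) (y := Sum.inl y) h ?_).trans
      (by simp [fromBlocks])
    exact fun hh => h1 hh.symm
  · fin_cases x <;> fin_cases y <;> simp [fromBlocks, Matrix.smul_apply]
  · refine (comm_diag_entry (x := Sum.inr (Sum.inl x)) (y := Sum.inr (Sum.inr y)) h ?_).trans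
      (by simp [fromBlocks])
    exact h3
  · refine (comm_diag_entry (x := Sum.inr (Sum.inr x)) (y := Sum.inl y) h ?_).trans
      (by simp [fromBlocks])
    exact fun hh => h2 hh.symm
  · refine (comm_diag_entry (x := Sum.inr (Sum.inr x)) (y := Sum.inr (Sum.inl y)) h ?_).trans
      (by simp [fromBlocks])
    exact fun hh => h3 hh.symm
  · fin_cases x <;> fin_cases y <;> simp [fromBlocks, Matrix.smul_apply]


variable (F m) in
lemma part1 (l : Fˣ) (hl : l ^ 2 ≠ 1) :
    ∃ a : SpGroup (m + 1) F,
      Nonempty ((Subgroup.centralizer ({a} : Set (SpGroup (m + 1) F))) ≃* Fˣ × SpGroup m F) := by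
  classical
  have memPsi : ∀ p : Fˣ × SpGroup m F,
      E F m (bunit (p.2 : GL (Fin m ⊕ Fin m) F) (dGL p.1)) ∈ SpGroup (m+1) F := by
    intro p
    rw [bunit_mem_iff]
    exact ⟨p.2.2, by rw [dGL_coe]; exact dmat_sp p.1⟩
  have haSp : E F m (bunit 1 (dGL l)) ∈ SpGroup (m+1) F := memPsi (l, 1)
  set a : SpGroup (m+1) F := ⟨E F m (bunit 1 (dGL l)), haSp⟩ with ha
  refine ⟨a, ?_⟩
  have memC : ∀ p : Fˣ × SpGroup m F,
      (⟨E F m (bunit (p.2 : GL (Fin m ⊕ Fin m) F) (dGL p.1)), memPsi p⟩ : SpGroup (m+1) F) ∈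
        Subgroup.centralizer ({a} : Set (SpGroup (m+1) F)) := by
    intro p
    rw [Subgroup.mem_centralizer_iff]
    rintro b hb
    rw [Set.mem_singleton_iff] at hb
    subst hb
    ext : 1
    rw [Subgroup.coe_mul, Subgroup.coe_mul]
    show E F m (bunit 1 (dGL l)) * E F m (bunit _ (dGL p.1))
        = E F m (bunit _ (dGL p.1)) * E F m (bunit 1 (dGL l))
    rw [← _root_.map_mul, ← _root_.map_mul, bunit_mul, bunit_mul, one_mul, mul_one,
      dGL_mul, dGL_mul, mul_comm]
  let Ψ : Fˣ × SpGroup m F →* Subgroup.centralizer ({a} : Set (SpGroup (m+1) F)) :=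
  { toFun := fun p => ⟨⟨E F m (bunit (p.2 : GL (Fin m ⊕ Fin m) F) (dGL p.1)), memPsi p⟩, memC p⟩
    map_one' := by
      ext : 2
      show E F m (bunit 1 (dGL 1)) = 1
      rw [dGL_one, bunit_one, _root_.map_one]
    map_mul' := by
      intro p q
      ext : 2
      show E F m (bunit _ (dGL (p.1 * q.1))) = E F m (bunit _ (dGL p.1)) * E F m (bunit _ (dGL q.1))
      rw [← _root_.map_mul, bunit_mul, dGL_mul]
      rfl }
  have hinj : Function.Injective Ψ := by
    intro p q hpq
    have h1 : E F m (bunit (p.2 : GL (Fin m ⊕ Fin m) F) (dGL p.1))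
        = E F m (bunit (q.2 : GL (Fin m ⊕ Fin m) F) (dGL q.1)) := by
      exact congrArg (fun z => ((z : Subgroup.centralizer ({a} : Set (SpGroup (m+1) F))) :
        SpGroup (m+1) F).1) hpq
    have h2 := (E F m).injective h1
    have h3 := congrArg Units.val h2
    rw [bunit_coe, bunit_coe, fromBlocks_inj] at h3
    obtain ⟨hX, -, -, hY⟩ := h3
    rw [dGL_coe, dGL_coe] at hY
    have hα : p.1 = q.1 := by
      have := congrFun (congrFun hY (Sum.inl 0)) (Sum.inl 0)
      simp [dmat, fromBlocks, Matrix.smul_apply] at this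
      exact Units.ext this
    have hXeq : p.2 = q.2 := Subtype.ext (Units.ext hX)
    exact Prod.ext hα hXeq
  have hsurj : Function.Surjective Ψ := by
    rintro ⟨⟨z, hzSp⟩, hzC⟩
    set A := (E F m).symm z with hA
    have hEA : E F m A = z := (E F m).apply_symm_apply z
    -- commutation with a
    have hcomm : a.1 * z = z * a.1 := by
      have := (Subgroup.mem_centralizer_iff.mp hzC) a (Set.mem_singleton a)
      exact congrArg Subtype.val this
    have hcommK : bunit 1 (dGL l) * A = A * bunit 1 (dGL l) := by
      apply (E F m).injective
      rw [_root_.map_mul, _root_.map_mul, hEA]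
      exact hcomm
    have hMdiag : (A : Matrix (Km m) (Km m) F) * diagonal (wa (m := m) l)
        = diagonal (wa (m := m) l) * (A : Matrix (Km m) (Km m) F) := by
      have := congrArg Units.val hcommK
      rw [Units.val_mul, Units.val_mul, bunit_coe] at this
      simp only [Units.val_one] at this
      rw [dGL_coe, amat_diag] at this
      exact this.symm
    set M := (A : Matrix (Km m) (Km m) F) with hMdef
    set X := M.toBlocks₁₁ with hXdef
    set α := M (Sum.inr (Sum.inl 0)) (Sum.inr (Sum.inl 0)) with hαdef
    set β := M (Sum.inr (Sum.inr 0)) (Sum.inr (Sum.inr 0)) with hβdef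
    have hM : M = fromBlocks X 0 0 (fromBlocks (α • 1) 0 0 (β • 1)) :=
      block_of_comm_a hl hMdiag
    -- symplectic condition
    have hzSp' : Mᵀ * JK F m * M = JK F m := by
      rw [← mem_Sp_E_iff, hEA]
      exact hzSp
    rw [hM, sp_blocks, JK, fromBlocks_inj] at hzSp'
    obtain ⟨hXsp, -, -, hYsp⟩ := hzSp'
    -- extract α β relation
    have hprod : (fromBlocks (α • (1 : Matrix (Fin 1) (Fin 1) F)) 0 0
            (β • (1 : Matrix (Fin 1) (Fin 1) F)))ᵀ
        * (fromBlocks 0 1 (-1) 0 : Matrix (Fin 1 ⊕ Fin 1) (Fin 1 ⊕ Fin 1) F)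
        * fromBlocks (α • (1 : Matrix (Fin 1) (Fin 1) F)) 0 0 (β • (1 : Matrix (Fin 1) (Fin 1) F))
        = fromBlocks 0 ((α * β) • (1 : Matrix (Fin 1) (Fin 1) F)) (-((β * α) • (1 : Matrix (Fin 1) (Fin 1) F))) 0 := by
      rw [fromBlocks_transpose, fromBlocks_multiply, fromBlocks_multiply]
      simp [smul_smul, mul_comm]
    rw [hprod, fromBlocks_inj] at hYsp
    obtain ⟨-, hαβ1, -, -⟩ := hYsp
    have hαβ : α * β = 1 := by
      have := congrFun (congrFun hαβ1 0) 0
      simpa using this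
    set αu : Fˣ := ⟨α, β, hαβ, by rw [mul_comm]; exact hαβ⟩ with hαu
    -- X is invertible
    have hMunit : IsUnit M := A.isUnit
    have hdet : IsUnit X.det := by
      have h4 := (Matrix.isUnit_iff_isUnit_det M).mp hMunit
      rw [hM, det_fromBlocks_zero₁₂] at h4
      exact isUnit_of_mul_isUnit_left h4
    have hXunit : IsUnit X := (Matrix.isUnit_iff_isUnit_det X).mpr hdet
    set Xu := hXunit.unit with hXu
    have hXuc : (Xu : Matrix (Fin m ⊕ Fin m) (Fin m ⊕ Fin m) F) = X := hXunit.unit_spec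
    have hXmem : Xu ∈ SpGroup m F := by
      rw [mem_SpGroup_iff F, hXuc]
      exact hXsp
    refine ⟨(αu, ⟨Xu, hXmem⟩), ?_⟩
    have hbA : bunit Xu (dGL αu) = A := by
      ext : 1
      rw [bunit_coe, dGL_coe, hXuc]
      show _ = M
      rw [hM]
      rfl
    ext : 2
    show E F m (bunit Xu (dGL αu)) = z
    rw [hbA, hEA]
  exact ⟨(MulEquiv.ofBijective Ψ ⟨hinj, hsurj⟩).symm⟩


variable (F m) in
/-- Embedding `Sp(2m) → Sp(2m+2)` fixing the extra hyperbolic plane. -/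
noncomputable def iota : SpGroup m F →* SpGroup (m+1) F where
  toFun X := ⟨E F m (bunit (X : GL (Fin m ⊕ Fin m) F) 1), by
    rw [bunit_mem_iff]
    refine ⟨X.2, ?_⟩
    simp⟩
  map_one' := by
    ext : 1
    show E F m (bunit 1 1) = _
    rw [bunit_one, _root_.map_one, OneMemClass.coe_one]
  map_mul' X Y := by
    ext : 1
    show E F m (bunit _ 1) = E F m (bunit _ 1) * E F m (bunit _ 1)
    rw [← _root_.map_mul, bunit_mul, one_mul]
    rfl

lemma iota_coe (X : SpGroup m F) :
    ((iota F m X : SpGroup (m+1) F) : GL (Fin (m+1) ⊕ Fin (m+1)) F)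
      = E F m (bunit (X : GL (Fin m ⊕ Fin m) F) 1) := rfl

lemma dmat_neg_one : (dmat (-1 : Fˣ) : Matrix (Fin 1 ⊕ Fin 1) (Fin 1 ⊕ Fin 1) F) = -1 := by
  ext x y
  rcases x with x | x <;> rcases y with y | y <;>
    simp [dmat, fromBlocks, Matrix.one_apply, Matrix.neg_apply, Matrix.smul_apply] <;>
    split <;> simp_all

lemma cmat_diag' :
    (fromBlocks 1 0 0 (dmat (-1 : Fˣ)) : Matrix (Km m) (Km m) F) = diagonal (wc (m := m)) := by
  rw [dmat_neg_one, cmat_diag]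

/-- A homomorphism out of `Multiplicative (ZMod 2)` from a square root of one. -/
def homOfSq {G : Type*} [Group G] (c : G) (hc : c ^ 2 = 1) :
    Multiplicative (ZMod 2) →* G where
  toFun t := c ^ (Multiplicative.toAdd t).val
  map_one' := by
    show c ^ (ZMod.val (0 : ZMod 2)) = 1
    simp
  map_mul' x y := by
    have key : ∀ a : ℕ, c ^ a = c ^ (a % 2) := by
      intro a
      conv_lhs => rw [← Nat.div_add_mod a 2]
      rw [pow_add, pow_mul, hc, one_pow, one_mul]
    show c ^ (Multiplicative.toAdd x + Multiplicative.toAdd y).val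
        = c ^ (Multiplicative.toAdd x).val * c ^ (Multiplicative.toAdd y).val
    rw [← pow_add, key ((Multiplicative.toAdd x).val + (Multiplicative.toAdd y).val),
      key ((Multiplicative.toAdd x + Multiplicative.toAdd y).val)]
    congr 1
    rw [ZMod.val_add]
    omega

variable (F m) in
lemma part2 (hchar : (2 : F) ≠ 0) (hAcc : IsAcceptable (SpGroup (m+1) F)) :
    IsAcceptable (SpGroup m F) := by
  intro H _ _ φ₁ φ₂ helem
  -- the central involution on the extra plane
  have hcmem : E F m (bunit 1 (dGL (-1 : Fˣ))) ∈ SpGroup (m+1) F := by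
    rw [bunit_mem_iff]
    exact ⟨one_mem _, by rw [dGL_coe]; exact dmat_sp _⟩
  set c : SpGroup (m+1) F := ⟨E F m (bunit 1 (dGL (-1 : Fˣ))), hcmem⟩ with hcdef
  have hcc : c * c = 1 := by
    have hneg : ((-1 : Fˣ) * (-1 : Fˣ)) = 1 := by norm_num
    ext : 1
    rw [MulMemClass.coe_mul, OneMemClass.coe_one]
    show E F m (bunit 1 (dGL (-1 : Fˣ))) * E F m (bunit 1 (dGL (-1 : Fˣ))) = 1
    rw [← _root_.map_mul, bunit_mul, one_mul, dGL_mul, hneg, dGL_one, bunit_one,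
      _root_.map_one]
  have hc2 : c ^ 2 = 1 := by rw [sq]; exact hcc
  -- `c` commutes with the image of `iota`
  have hcomm : ∀ X : SpGroup m F, Commute (iota F m X) c := by
    intro X
    show iota F m X * c = c * iota F m X
    ext : 1
    rw [MulMemClass.coe_mul, MulMemClass.coe_mul]
    show E F m (bunit _ 1) * E F m (bunit 1 (dGL (-1 : Fˣ)))
        = E F m (bunit 1 (dGL (-1 : Fˣ))) * E F m (bunit _ 1)
    rw [← _root_.map_mul, ← _root_.map_mul, bunit_mul, bunit_mul, one_mul, mul_one,
      one_mul, mul_one]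
  set χ : Multiplicative (ZMod 2) →* SpGroup (m+1) F := homOfSq c hc2 with hχ
  have hcommχ : ∀ (X : SpGroup m F) (t : Multiplicative (ZMod 2)),
      Commute (iota F m X) (χ t) := by
    intro X t
    exact (hcomm X).pow_right _
  set ψ₁ : H × Multiplicative (ZMod 2) →* SpGroup (m+1) F :=
    MonoidHom.noncommCoprod ((iota F m).comp φ₁) χ (fun x y => hcommχ (φ₁ x) y) with hψ₁
  set ψ₂ : H × Multiplicative (ZMod 2) →* SpGroup (m+1) F :=
    MonoidHom.noncommCoprod ((iota F m).comp φ₂) χ (fun x y => hcommχ (φ₂ x) y) with hψ₂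
  -- element-conjugacy of the extended homomorphisms
  have helem' : ∀ p : H × Multiplicative (ZMod 2),
      ∃ g : SpGroup (m+1) F, g * ψ₁ p * g⁻¹ = ψ₂ p := by
    rintro ⟨h, t⟩
    obtain ⟨g₀, hg₀⟩ := helem h
    refine ⟨iota F m g₀, ?_⟩
    have h0 : Commute ((iota F m g₀)⁻¹) (χ t) := ((hcomm g₀).pow_right _).inv_left
    show iota F m g₀ * (iota F m (φ₁ h) * χ t) * (iota F m g₀)⁻¹ = iota F m (φ₂ h) * χ t
    rw [← hg₀, _root_.map_mul, _root_.map_mul, map_inv]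
    simp only [mul_assoc]
    rw [← h0.eq]
  obtain ⟨g, hg⟩ := hAcc (H × Multiplicative (ZMod 2)) inferInstance inferInstance ψ₁ ψ₂ helem'
  -- extract commutation with c and the conjugation property
  have hgc : g * c = c * g := by
    have h1 := hg (1, Multiplicative.ofAdd 1)
    have e1 : ψ₁ ((1 : H), Multiplicative.ofAdd (1 : ZMod 2)) = c := by
      show iota F m (φ₁ 1) * χ (Multiplicative.ofAdd 1) = c
      rw [_root_.map_one, _root_.map_one, one_mul]
      show c ^ ZMod.val (1 : ZMod 2) = c
      rw [show ZMod.val (1 : ZMod 2) = 1 from rfl, pow_one]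
    have e2 : ψ₂ ((1 : H), Multiplicative.ofAdd (1 : ZMod 2)) = c := by
      show iota F m (φ₂ 1) * χ (Multiplicative.ofAdd 1) = c
      rw [_root_.map_one, _root_.map_one, one_mul]
      show c ^ ZMod.val (1 : ZMod 2) = c
      rw [show ZMod.val (1 : ZMod 2) = 1 from rfl, pow_one]
    rw [e1, e2, mul_inv_eq_iff_eq_mul] at h1
    exact h1
  have hgφ : ∀ h : H, g * iota F m (φ₁ h) = iota F m (φ₂ h) * g := by
    intro h
    have h1 := hg (h, 1)
    have e1 : ψ₁ (h, (1 : Multiplicative (ZMod 2))) = iota F m (φ₁ h) := by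
      show iota F m (φ₁ h) * χ 1 = _
      rw [_root_.map_one, mul_one]
    have e2 : ψ₂ (h, (1 : Multiplicative (ZMod 2))) = iota F m (φ₂ h) := by
      show iota F m (φ₂ h) * χ 1 = _
      rw [_root_.map_one, mul_one]
    rw [e1, e2, mul_inv_eq_iff_eq_mul] at h1
    exact h1
  -- pass to block coordinates
  set gv : GL (Fin (m+1) ⊕ Fin (m+1)) F := (g : GL (Fin (m+1) ⊕ Fin (m+1)) F) with hgv
  set A := (E F m).symm gv with hA
  have hEA : E F m A = gv := (E F m).apply_symm_apply gv
  have hcommK : A * bunit 1 (dGL (-1 : Fˣ)) = bunit 1 (dGL (-1 : Fˣ)) * A := by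
    apply (E F m).injective
    rw [_root_.map_mul, _root_.map_mul, hEA]
    exact congrArg Subtype.val hgc
  set M := (A : Matrix (Km m) (Km m) F) with hMdef
  have hMdiag : M * diagonal (wc (m := m)) = diagonal (wc (m := m)) * M := by
    have h2 := congrArg Units.val hcommK
    rw [Units.val_mul, Units.val_mul, bunit_coe, dGL_coe] at h2
    simp only [Units.val_one] at h2
    rw [cmat_diag'] at h2
    exact h2
  have hMblock : M = fromBlocks M.toBlocks₁₁ 0 0 M.toBlocks₂₂ :=
    block_of_comm_c hchar hMdiag
  set X := M.toBlocks₁₁ with hXdef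
  -- symplectic condition on X
  have hgSp : Mᵀ * JK F m * M = JK F m := by
    rw [← mem_Sp_E_iff, hEA]
    exact g.2
  rw [hMblock, sp_blocks, JK, fromBlocks_inj] at hgSp
  obtain ⟨hXsp, -, -, -⟩ := hgSp
  -- invertibility of X
  have hdet : IsUnit X.det := by
    have h4 := (Matrix.isUnit_iff_isUnit_det M).mp A.isUnit
    rw [hMblock, det_fromBlocks_zero₁₂] at h4
    exact isUnit_of_mul_isUnit_left h4
  have hXunit : IsUnit X := (Matrix.isUnit_iff_isUnit_det X).mpr hdet
  set Xu := hXunit.unit with hXu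
  have hXuc : (Xu : Matrix (Fin m ⊕ Fin m) (Fin m ⊕ Fin m) F) = X := hXunit.unit_spec
  have hXmem : Xu ∈ SpGroup m F := by
    rw [mem_SpGroup_iff F, hXuc]
    exact hXsp
  refine ⟨⟨Xu, hXmem⟩, ?_⟩
  intro h
  rw [mul_inv_eq_iff_eq_mul]
  -- transfer the conjugation relation through E
  have hKrel : A * bunit ((φ₁ h : SpGroup m F) : GL (Fin m ⊕ Fin m) F) 1
      = bunit ((φ₂ h : SpGroup m F) : GL (Fin m ⊕ Fin m) F) 1 * A := by
    apply (E F m).injective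
    rw [_root_.map_mul, _root_.map_mul, hEA]
    exact congrArg Subtype.val (hgφ h)
  have hMrel := congrArg Units.val hKrel
  rw [Units.val_mul, Units.val_mul, bunit_coe, bunit_coe] at hMrel
  simp only [Units.val_one] at hMrel
  rw [← hMdef] at hMrel
  rw [hMblock, fromBlocks_multiply, fromBlocks_multiply, fromBlocks_inj] at hMrel
  obtain ⟨hX1, -, -, -⟩ := hMrel
  simp only [Matrix.mul_zero, Matrix.zero_mul, add_zero, zero_add] at hX1
  ext : 2
  rw [MulMemClass.coe_mul, MulMemClass.coe_mul, Units.val_mul, Units.val_mul]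
  show (Xu : Matrix (Fin m ⊕ Fin m) (Fin m ⊕ Fin m) F) * _ = _ * (Xu : Matrix _ _ F)
  rw [hXuc]
  exact hX1

end SpAux

theorem Sp_acceptable_descends (F : Type) [Field F] (hchar : (2 : F) ≠ 0)
    (hu : ∃ u : Fˣ, u ^ 2 ≠ 1) (m : ℕ) :
    (∃ a : SpGroup (m + 1) F,
      Nonempty ((Subgroup.centralizer ({a} : Set (SpGroup (m + 1) F))) ≃* Fˣ × SpGroup m F)) ∧
    (IsAcceptable (SpGroup (m + 1) F) → IsAcceptable (SpGroup m F)) := by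
  obtain ⟨l, hl⟩ := hu
  exact ⟨SpAux.part1 F m l hl, SpAux.part2 F m hchar⟩
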